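/- arXiv:1407.8068 — 2 statements merged into one kernel-verified Lean document; each statement's English description precedes it below -/
import Mathlib

section
/- There exist a constant ĉ_* > 0 and an integer n₂ ≥ 2 such that for every n ≥ n₂ one has ∑_{i=1}^{n−1} j_n(i) − g_n ≥ ĉ_* · n^{H−1/2}. In particular ∑_{i=1}^{n−1} j_n(i) ≥ ĉ_* · n^{H−1/2} for all n ≥ n₂. -/
open MeasureTheory

/-- The normalizing constant `c_H`. -/
noncomputable def cH (H : ℝ) : ℝ :=
  Real.sqrt (2 * H * Real.Gamma (3/2 - H) / (Real.Gamma (H + 1/2) * Real.Gamma (2 - 2*H)))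

/-- The coefficient `j_n(i)` of the disturbed random walk. -/
noncomputable def jn (H σ : ℝ) (n i : ℕ) : ℝ :=
  σ * cH H * (H - 1/2) *
    ∫ x in ((i : ℝ) - 1)..(i : ℝ),
      x ^ ((1:ℝ)/2 - H) *
        ∫ v in (0:ℝ)..1, (v + n - 1) ^ (H - 1/2) * (v + n - 1 - x) ^ (H - 3/2)

/-- The coefficient `g_n` of the disturbed random walk. -/
noncomputable def gn (H σ : ℝ) (n : ℕ) : ℝ :=
  σ * cH H * (H - 1/2) *
    ∫ x in ((n : ℝ) - 1)..(n : ℝ),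
      x ^ ((1:ℝ)/2 - H) * ((n : ℝ) - x) ^ (H - 1/2) *
        ∫ y in (0:ℝ)..1, (y * ((n : ℝ) - x) + x) ^ (H - 1/2) * y ^ (H - 3/2)

open Set intervalIntegral

variable {H : ℝ}




/-- Monotonicity of interval integrals with pointwise bound on `Ioc`. -/
lemma myIntegralMono {f g : ℝ → ℝ} {a b : ℝ} (hab : a ≤ b)
    (hf : IntervalIntegrable f volume a b) (hg : IntervalIntegrable g volume a b)
    (h : ∀ x ∈ Set.Ioc a b, f x ≤ g x) :
    (∫ x in a..b, f x) ≤ ∫ x in a..b, g x := by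
  rw [intervalIntegral.integral_of_le hab, intervalIntegral.integral_of_le hab]
  exact setIntegral_mono_on hf.1 hg.1 measurableSet_Ioc h

lemma shift_integrable (h1 : 1/2 < H) (c : ℝ) :
    IntervalIntegrable (fun v : ℝ => (v + c) ^ (H - 3/2)) volume 0 1 := by
  have h := (intervalIntegral.intervalIntegrable_rpow'
    (show (-1:ℝ) < H - 3/2 by linarith) (a := c) (b := 1 + c)).comp_add_right c
  simpa using h

lemma inner_integrable (h1 : 1/2 < H) {m c : ℝ} (hm : 0 ≤ m) (hc : 0 ≤ c) :
    IntervalIntegrable (fun v : ℝ => (v + m) ^ (H - 1/2) * (v + c) ^ (H - 3/2))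
      volume 0 1 := by
  have hI : Set.uIoc (0:ℝ) 1 = Set.Ioc (0:ℝ) 1 := Set.uIoc_of_le zero_le_one
  refine ((shift_integrable h1 c).const_mul ((m+1) ^ (H - 1/2))).mono_fun ?_ ?_
  · rw [hI]
    refine ContinuousOn.aestronglyMeasurable ?_ measurableSet_Ioc
    apply ContinuousOn.mul
    · exact (continuousOn_id.add continuousOn_const).rpow_const
        (fun x hx => Or.inl (by intro h; change x + m = 0 at h; nlinarith [hx.1]))
    · exact (continuousOn_id.add continuousOn_const).rpow_const
        (fun x hx => Or.inl (by intro h; change x + c = 0 at h; nlinarith [hx.1]))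
  · rw [hI]
    filter_upwards [ae_restrict_mem measurableSet_Ioc] with v hv
    have h1v : (0:ℝ) < v + m := by nlinarith [hv.1]
    have h2v : (0:ℝ) ≤ v + c := by nlinarith [hv.1]
    rw [Real.norm_eq_abs, Real.norm_eq_abs,
      abs_of_nonneg (by positivity), abs_of_nonneg (by positivity)]
    exact mul_le_mul_of_nonneg_right
      (Real.rpow_le_rpow h1v.le (by linarith [hv.2]) (by linarith))
      (Real.rpow_nonneg h2v _)

lemma rpow_integral_01 (h1 : 1/2 < H) (A : ℝ) :
    (∫ v in (0:ℝ)..1, A * v ^ (H - 3/2)) = A / (H - 1/2) := by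
  rw [intervalIntegral.integral_const_mul,
    integral_rpow (Or.inl (show (-1:ℝ) < H - 3/2 by linarith))]
  rw [show H - 3/2 + 1 = H - 1/2 by ring, Real.one_rpow,
    Real.zero_rpow (by linarith : H - 1/2 ≠ 0)]
  ring

lemma inner_le (h1 : 1/2 < H) (h2 : H < 1) {m c : ℝ} (hm : 0 ≤ m) (hc : 0 ≤ c) :
    (∫ v in (0:ℝ)..1, (v + m) ^ (H - 1/2) * (v + c) ^ (H - 3/2))
      ≤ (m + 1) ^ (H - 1/2) / (H - 1/2) := by
  rw [← rpow_integral_01 h1 ((m+1) ^ (H - 1/2))]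
  refine myIntegralMono zero_le_one (inner_integrable h1 hm hc)
    ((intervalIntegral.intervalIntegrable_rpow'
      (show (-1:ℝ) < H - 3/2 by linarith)).const_mul _) ?_
  intro v hv
  have h1v : (0:ℝ) < v := hv.1
  refine mul_le_mul (Real.rpow_le_rpow (by linarith) (by linarith [hv.2]) (by linarith))
    (Real.rpow_le_rpow_of_nonpos h1v (by linarith) (by linarith))
    (Real.rpow_nonneg (by linarith) _) (Real.rpow_nonneg (by linarith) _)

lemma inner_ge (h1 : 1/2 < H) (h2 : H < 1) {m c : ℝ} (hm : 0 ≤ m) (hc : 0 ≤ c) (hcm : c ≤ m) :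
    m ^ (H - 1/2) * (m + 1) ^ (H - 3/2)
      ≤ ∫ v in (0:ℝ)..1, (v + m) ^ (H - 1/2) * (v + c) ^ (H - 3/2) := by
  have := myIntegralMono zero_le_one (_root_.intervalIntegrable_const
      (c := m ^ (H - 1/2) * (m + 1) ^ (H - 3/2)))
    (inner_integrable h1 hm hc) ?_
  · simpa using this
  · intro v hv
    have h1v : (0:ℝ) < v := hv.1
    refine mul_le_mul (Real.rpow_le_rpow hm (by linarith) (by linarith))
      (Real.rpow_le_rpow_of_nonpos (by linarith) (by linarith [hv.2]) (by linarith))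
      (Real.rpow_nonneg (by linarith) _) (Real.rpow_nonneg (by linarith) _)

lemma inner_nonneg (h1 : 1/2 < H) {m c : ℝ} (hm : 0 ≤ m) (hc : 0 ≤ c) :
    0 ≤ ∫ v in (0:ℝ)..1, (v + m) ^ (H - 1/2) * (v + c) ^ (H - 3/2) := by
  refine intervalIntegral.integral_nonneg zero_le_one (fun v hv => ?_)
  exact mul_nonneg (Real.rpow_nonneg (by linarith [hv.1]) _)
    (Real.rpow_nonneg (by linarith [hv.1]) _)



lemma I_mono (h1 : 1/2 < H) (h2 : H < 1) {m a b : ℝ} (hm : 0 ≤ m) (hbm : b ≤ m) :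
    MonotoneOn (fun x : ℝ => ∫ v in (0:ℝ)..1, (v+m)^(H-1/2) * (v+(m-x))^(H-3/2))
      (Set.Ioc a b) := by
  intro x1 hx1 x2 hx2 h12
  refine myIntegralMono zero_le_one (inner_integrable h1 hm (by linarith [hx1.2]))
    (inner_integrable h1 hm (by linarith [hx2.2])) ?_
  intro v hv
  exact mul_le_mul_of_nonneg_left
    (Real.rpow_le_rpow_of_nonpos (by linarith [hv.1, hx2.2]) (by linarith) (by linarith))
    (Real.rpow_nonneg (by linarith [hv.1]) _)

lemma jn_integral_ge (h1 : 1/2 < H) (h2 : H < 1) (n i : ℕ) (hn : 2 ≤ n)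
    (hi1 : 1 ≤ i) (hi2 : (i:ℝ) ≤ (n:ℝ) - 1) :
    (n:ℝ) ^ ((1:ℝ)/2 - H) * (((n:ℝ)-1) ^ (H - 1/2) * (n:ℝ) ^ (H - 3/2))
      ≤ ∫ x in ((i : ℝ) - 1)..(i : ℝ),
          x ^ ((1:ℝ)/2 - H) *
            ∫ v in (0:ℝ)..1, (v + n - 1) ^ (H - 1/2) * (v + n - 1 - x) ^ (H - 3/2) := by
  have hn2 : (2:ℝ) ≤ (n:ℝ) := by exact_mod_cast hn
  have hi1' : (1:ℝ) ≤ (i:ℝ) := by exact_mod_cast hi1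
  set m : ℝ := (n:ℝ) - 1 with hm_def
  have hm : 0 ≤ m := by simp only [hm_def]; linarith
  have hcongr : ∀ x : ℝ,
      (∫ v in (0:ℝ)..1, (v + (n:ℝ) - 1) ^ (H - 1/2) * (v + (n:ℝ) - 1 - x) ^ (H - 3/2))
        = ∫ v in (0:ℝ)..1, (v + m) ^ (H - 1/2) * (v + (m - x)) ^ (H - 3/2) := by
    intro x; congr 1; funext v
    rw [show v + (n:ℝ) - 1 = v + m by rw [hm_def]; ring,
      show v + m - x = v + (m - x) by ring]
  simp only [hcongr]
  set I : ℝ → ℝ := fun x => ∫ v in (0:ℝ)..1, (v+m)^(H-1/2) * (v+(m-x))^(H-3/2) with hI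
  have hIuIoc : Set.uIoc ((i:ℝ)-1) (i:ℝ) = Set.Ioc ((i:ℝ)-1) (i:ℝ) :=
    Set.uIoc_of_le (by linarith)
  have hInonneg : ∀ x ∈ Set.Ioc ((i:ℝ)-1) (i:ℝ), 0 ≤ I x := by
    intro x hx
    exact inner_nonneg h1 hm (by simp only [hm_def]; linarith [hx.2, hi2])
  have hIle : ∀ x ∈ Set.Ioc ((i:ℝ)-1) (i:ℝ), I x ≤ (m+1)^(H-1/2)/(H-1/2) := by
    intro x hx
    exact inner_le h1 h2 hm (by simp only [hm_def]; linarith [hx.2, hi2])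
  have hf_int : IntervalIntegrable (fun x => x ^ ((1:ℝ)/2-H) * I x) volume ((i:ℝ)-1) (i:ℝ) := by
    have hdom : IntervalIntegrable
        (fun x : ℝ => x ^ ((1:ℝ)/2-H) * ((m+1)^(H-1/2)/(H-1/2)))
        volume ((i:ℝ)-1) (i:ℝ) :=
      (intervalIntegral.intervalIntegrable_rpow'
        (show (-1:ℝ) < 1/2 - H by linarith)).mul_const _
    refine hdom.mono_fun ?_ ?_
    · rw [hIuIoc]
      have m1 : AEStronglyMeasurable (fun x : ℝ => x ^ ((1:ℝ)/2-H))
          (volume.restrict (Set.Ioc ((i:ℝ)-1) (i:ℝ))) := by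
        refine ContinuousOn.aestronglyMeasurable ?_ measurableSet_Ioc
        exact continuousOn_id.rpow_const
          (fun x hx => Or.inl (by simp only [id]; intro h; nlinarith [hx.1]))
      have m2 : AEMeasurable I (volume.restrict (Set.Ioc ((i:ℝ)-1) (i:ℝ))) :=
        aemeasurable_restrict_of_monotoneOn measurableSet_Ioc
          (I_mono h1 h2 hm hi2)
      exact (m1.aemeasurable.mul m2).aestronglyMeasurable
    · rw [hIuIoc]
      filter_upwards [ae_restrict_mem measurableSet_Ioc] with x hx
      have hx0 : 0 < x := by linarith [hx.1]
      have hxr : 0 ≤ x ^ ((1:ℝ)/2-H) := Real.rpow_nonneg hx0.le _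
      rw [Real.norm_eq_abs, Real.norm_eq_abs,
        abs_of_nonneg (mul_nonneg hxr (hInonneg x hx)),
        abs_of_nonneg (mul_nonneg hxr (div_nonneg (Real.rpow_nonneg (by linarith) _) (by linarith)))]
      exact mul_le_mul_of_nonneg_left (hIle x hx) hxr
  have hmn : (n:ℝ) = m + 1 := by rw [hm_def]; ring
  rw [hmn]
  refine le_trans (le_of_eq ?_)
    (myIntegralMono (show (i:ℝ)-1 ≤ (i:ℝ) by linarith)
      (_root_.intervalIntegrable_const
        (c := (m+1) ^ ((1:ℝ)/2-H) * (m^(H-1/2) * (m+1)^(H-3/2)))) hf_int ?_)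
  · rw [intervalIntegral.integral_const, show (i:ℝ) - ((i:ℝ)-1) = 1 by ring, one_smul]
  · intro x hx
    have hx0 : 0 < x := by linarith [hx.1]
    refine mul_le_mul
      (Real.rpow_le_rpow_of_nonpos hx0 (by linarith [hx.2, hi2]) (by linarith)) ?_
      (mul_nonneg (Real.rpow_nonneg hm _) (Real.rpow_nonneg (by linarith) _))
      (Real.rpow_nonneg hx0.le _)
    exact inner_ge h1 h2 hm (by linarith [hx.2, hi2]) (by linarith [hx0])



lemma J_integrable (h1 : 1/2 < H) {b x : ℝ} (hb : 0 ≤ b) (hx : 0 ≤ x) :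
    IntervalIntegrable (fun y : ℝ => (y * b + x) ^ (H - 1/2) * y ^ (H - 3/2))
      volume 0 1 := by
  have hI : Set.uIoc (0:ℝ) 1 = Set.Ioc (0:ℝ) 1 := Set.uIoc_of_le zero_le_one
  refine ((intervalIntegral.intervalIntegrable_rpow'
    (show (-1:ℝ) < H - 3/2 by linarith)).const_mul ((b + x) ^ (H - 1/2))).mono_fun ?_ ?_
  · rw [hI]
    refine ContinuousOn.aestronglyMeasurable ?_ measurableSet_Ioc
    apply ContinuousOn.mul
    · exact ((continuousOn_id.mul continuousOn_const).add continuousOn_const).rpow_const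
        (fun y hy => Or.inr (by linarith))
    · exact continuousOn_id.rpow_const
        (fun y hy => Or.inl (by simp only [id]; exact ne_of_gt hy.1))
  · rw [hI]
    filter_upwards [ae_restrict_mem measurableSet_Ioc] with y hy
    have hy0 : (0:ℝ) < y := hy.1
    have hbase : (0:ℝ) ≤ y * b + x := by nlinarith
    rw [Real.norm_eq_abs, Real.norm_eq_abs,
      abs_of_nonneg (mul_nonneg (Real.rpow_nonneg hbase _) (Real.rpow_nonneg hy0.le _)),
      abs_of_nonneg (mul_nonneg (Real.rpow_nonneg (by linarith) _) (Real.rpow_nonneg hy0.le _))]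
    exact mul_le_mul_of_nonneg_right
      (Real.rpow_le_rpow hbase (by nlinarith [hy.2]) (by linarith))
      (Real.rpow_nonneg hy0.le _)

lemma J_le (h1 : 1/2 < H) {b x s : ℝ} (hb : 0 ≤ b) (hx : 0 ≤ x) (hs : b + x ≤ s) :
    (∫ y in (0:ℝ)..1, (y * b + x) ^ (H - 1/2) * y ^ (H - 3/2))
      ≤ s ^ (H - 1/2) / (H - 1/2) := by
  rw [← rpow_integral_01 h1 (s ^ (H - 1/2))]
  refine myIntegralMono zero_le_one (J_integrable h1 hb hx)
    ((intervalIntegral.intervalIntegrable_rpow'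
      (show (-1:ℝ) < H - 3/2 by linarith)).const_mul _) ?_
  intro y hy
  have hy0 : (0:ℝ) < y := hy.1
  have hbase : (0:ℝ) ≤ y * b + x := by nlinarith
  exact mul_le_mul_of_nonneg_right
    (Real.rpow_le_rpow hbase (by nlinarith [hy.2]) (by linarith))
    (Real.rpow_nonneg hy0.le _)

lemma J_nonneg (h1 : 1/2 < H) {b x : ℝ} (hb : 0 ≤ b) (hx : 0 ≤ x) :
    0 ≤ ∫ y in (0:ℝ)..1, (y * b + x) ^ (H - 1/2) * y ^ (H - 3/2) := by
  refine intervalIntegral.integral_nonneg zero_le_one (fun y hy => ?_)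
  exact mul_nonneg (Real.rpow_nonneg (by nlinarith [hy.1]) _)
    (Real.rpow_nonneg hy.1 _)

lemma gn_integral_le (h1 : 1/2 < H) (h2 : H < 1) (n : ℕ) (hn : 2 ≤ n) :
    (∫ x in ((n : ℝ) - 1)..(n : ℝ),
        x ^ ((1:ℝ)/2 - H) * ((n : ℝ) - x) ^ (H - 1/2) *
          ∫ y in (0:ℝ)..1, (y * ((n : ℝ) - x) + x) ^ (H - 1/2) * y ^ (H - 3/2))
      ≤ ((n:ℝ) - 1) ^ ((1:ℝ)/2 - H) * ((n:ℝ) ^ (H - 1/2) / (H - 1/2)) := by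
  have hn2 : (2:ℝ) ≤ (n:ℝ) := by exact_mod_cast hn
  set N : ℝ := (n:ℝ)
  set J : ℝ → ℝ := fun x => ∫ y in (0:ℝ)..1, (y * (N - x) + x) ^ (H - 1/2) * y ^ (H - 3/2)
    with hJ
  set U : ℝ := (N - 1) ^ ((1:ℝ)/2 - H) * (N ^ (H - 1/2) / (H - 1/2)) with hU
  have hUnn : 0 ≤ U := by
    refine mul_nonneg (Real.rpow_nonneg (by linarith) _)
      (div_nonneg (Real.rpow_nonneg (by linarith) _) (by linarith))
  have hfle : ∀ x ∈ Set.Ioc (N - 1) N,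
      x ^ ((1:ℝ)/2 - H) * (N - x) ^ (H - 1/2) * J x ≤ U := by
    intro x hx
    have hx0 : (0:ℝ) < x := by linarith [hx.1]
    have h1' : x ^ ((1:ℝ)/2 - H) ≤ (N - 1) ^ ((1:ℝ)/2 - H) :=
      Real.rpow_le_rpow_of_nonpos (by linarith) hx.1.le (by linarith)
    have h2' : (N - x) ^ (H - 1/2) ≤ 1 :=
      Real.rpow_le_one (by linarith [hx.2]) (by linarith [hx.1]) (by linarith)
    have h3' : J x ≤ N ^ (H - 1/2) / (H - 1/2) :=
      J_le h1 (by linarith [hx.2]) (by linarith) (by linarith)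
    have hJnn : 0 ≤ J x := J_nonneg h1 (by linarith [hx.2]) (by linarith)
    calc x ^ ((1:ℝ)/2 - H) * (N - x) ^ (H - 1/2) * J x
        ≤ (N - 1) ^ ((1:ℝ)/2 - H) * 1 * (N ^ (H - 1/2) / (H - 1/2)) := by
          refine mul_le_mul (mul_le_mul h1' h2' (Real.rpow_nonneg (by linarith [hx.2]) _)
            (Real.rpow_nonneg (by linarith) _)) h3' hJnn ?_
          exact mul_nonneg (Real.rpow_nonneg (by linarith) _) zero_le_one
      _ = U := by rw [hU]; ring
  have hfnn : ∀ x ∈ Set.Ioc (N - 1) N,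
      0 ≤ x ^ ((1:ℝ)/2 - H) * (N - x) ^ (H - 1/2) * J x := by
    intro x hx
    exact mul_nonneg (mul_nonneg (Real.rpow_nonneg (by linarith [hx.1]) _)
      (Real.rpow_nonneg (by linarith [hx.2]) _))
      (J_nonneg h1 (by linarith [hx.2]) (by linarith [hx.1]))
  have hIuIoc : Set.uIoc (N - 1) N = Set.Ioc (N - 1) N := Set.uIoc_of_le (by linarith)
  have hf_int : IntervalIntegrable
      (fun x => x ^ ((1:ℝ)/2 - H) * (N - x) ^ (H - 1/2) * J x) volume (N - 1) N := by
    refine (_root_.intervalIntegrable_const (c := U)).mono_fun ?_ ?_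
    · rw [hIuIoc]
      have g1 : ContinuousOn (fun x : ℝ => x ^ ((1:ℝ)/2 - H) * (N - x) ^ (H - 1/2))
          (Set.Ioc (N - 1) N) := by
        apply ContinuousOn.mul
        · exact continuousOn_id.rpow_const
            (fun x hx => Or.inl (by simp only [id]; intro h; nlinarith [hx.1]))
        · exact (continuousOn_const.sub continuousOn_id).rpow_const
            (fun x hx => Or.inr (by linarith))
      have g3 : AEMeasurable J (volume.restrict (Set.Ioc (N - 1) N)) := by
        refine aemeasurable_restrict_of_monotoneOn measurableSet_Ioc ?_
        intro x1 hx1 x2 hx2 h12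
        refine myIntegralMono zero_le_one
          (J_integrable h1 (by linarith [hx1.2]) (by linarith [hx1.1]))
          (J_integrable h1 (by linarith [hx2.2]) (by linarith [hx2.1])) ?_
        intro y hy
        refine mul_le_mul_of_nonneg_right
          (Real.rpow_le_rpow (by nlinarith [hy.1.le, hx1.1, hx1.2]) ?_ (by linarith))
          (Real.rpow_nonneg hy.1.le _)
        nlinarith [hy.2, hy.1.le]
      exact ((g1.aestronglyMeasurable measurableSet_Ioc).aemeasurable.mul
        g3).aestronglyMeasurable
    · rw [hIuIoc]
      filter_upwards [ae_restrict_mem measurableSet_Ioc] with x hx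
      rw [Real.norm_eq_abs, Real.norm_eq_abs, abs_of_nonneg (hfnn x hx)]
      exact le_trans (hfle x hx) (le_abs_self U)
  have := myIntegralMono (show N - 1 ≤ N by linarith) hf_int
    (_root_.intervalIntegrable_const (c := U)) hfle
  calc (∫ x in (N-1)..N, x ^ ((1:ℝ)/2 - H) * (N - x) ^ (H - 1/2) * J x) ≤ ∫ _x in (N-1)..N, U := this
    _ = U := by rw [intervalIntegral.integral_const, show N - (N - 1) = 1 by ring, one_smul]

lemma cH_pos (h1 : 1/2 < H) (h2 : H < 1) : 0 < cH H := by
  rw [cH]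
  apply Real.sqrt_pos.mpr
  apply div_pos
  · exact mul_pos (by linarith) (Real.Gamma_pos_of_pos (by linarith))
  · exact mul_pos (Real.Gamma_pos_of_pos (by linarith))
      (Real.Gamma_pos_of_pos (by linarith))

lemma gn_nonneg (h1 : 1/2 < H) (h2 : H < 1) {σ : ℝ} (hσ : 0 ≤ σ) {n : ℕ}
    (hn : 2 ≤ n) : 0 ≤ gn H σ n := by
  have hn2 : (2:ℝ) ≤ (n:ℝ) := by exact_mod_cast hn
  rw [gn]
  refine mul_nonneg (mul_nonneg (mul_nonneg hσ (cH_pos h1 h2).le) (by linarith)) ?_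
  refine intervalIntegral.integral_nonneg (by linarith) (fun x hx => ?_)
  refine mul_nonneg (mul_nonneg (Real.rpow_nonneg (by linarith [hx.1]) _)
    (Real.rpow_nonneg (by linarith [hx.2]) _)) ?_
  exact J_nonneg h1 (by linarith [hx.2]) (by linarith [hx.1])


/-- Estimate (3.6): there are `ĉ_* > 0` and `n₂ ≥ 2` such that for all `n ≥ n₂`,
`∑_{i=1}^{n-1} j_n(i) - g_n ≥ ĉ_* n^{H-1/2}`; in particular
`∑_{i=1}^{n-1} j_n(i) ≥ ĉ_* n^{H-1/2}`. -/
theorem sum_jn_lower_bound (H σ : ℝ) (hH : H ∈ Set.Ioo (1/2 : ℝ) 1) (hσ : 0 < σ) :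
    ∃ c : ℝ, 0 < c ∧ ∃ n₂ : ℕ, 2 ≤ n₂ ∧ ∀ n : ℕ, n₂ ≤ n →
      c * (n : ℝ) ^ (H - 1/2) ≤ (∑ i ∈ Finset.Icc 1 (n - 1), jn H σ n i) - gn H σ n ∧
      c * (n : ℝ) ^ (H - 1/2) ≤ ∑ i ∈ Finset.Icc 1 (n - 1), jn H σ n i := by
  obtain ⟨h1, h2⟩ := hH
  set p : ℝ := H - 1/2 with hp_def
  have hp : 0 < p := by rw [hp_def]; linarith
  set A : ℝ := σ * cH H * (H - 1/2) with hA_def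
  have hA : 0 < A := mul_pos (mul_pos hσ (cH_pos h1 h2)) (by linarith)
  refine ⟨A / 8, by positivity, max 2 ⌈((16/p) ^ p⁻¹ : ℝ)⌉₊, le_max_left _ _, ?_⟩
  intro n hn
  have hn2 : 2 ≤ n := le_trans (le_max_left _ _) hn
  have hN2 : (2:ℝ) ≤ (n:ℝ) := by exact_mod_cast hn2
  set N : ℝ := (n:ℝ) with hN_def
  have h16 : (0:ℝ) ≤ 16 / p := by positivity
  have hT : 16 / p ≤ N ^ p := by
    have hcl : ((16/p) ^ p⁻¹ : ℝ) ≤ N := by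
      have h' : ⌈((16/p) ^ p⁻¹ : ℝ)⌉₊ ≤ n := le_trans (le_max_right _ _) hn
      exact_mod_cast Nat.ceil_le.mp h'
    calc 16 / p = ((16/p) ^ p⁻¹) ^ p := (Real.rpow_inv_rpow h16 hp.ne').symm
      _ ≤ N ^ p := Real.rpow_le_rpow (Real.rpow_nonneg h16 _) hcl hp.le
  -- the constant from the term-wise lower bound
  set L : ℝ := N ^ ((1:ℝ)/2 - H) * ((N - 1) ^ (H - 1/2) * N ^ (H - 3/2)) with hL_def
  -- (N-1) * L ≥ N^p / 4
  have hL4 : N ^ p / 4 ≤ (N - 1) * L := by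
    have e : (N - 1) * L
        = ((N - 1) * (N - 1) ^ (H - 1/2)) * (N ^ ((1:ℝ)/2 - H) * N ^ (H - 3/2)) := by
      rw [hL_def]; ring
    have e1 : (N - 1) * (N - 1) ^ (H - 1/2) = (N - 1) ^ (1 + p) := by
      rw [Real.rpow_add (by linarith), Real.rpow_one, hp_def]
    have e2 : N ^ ((1:ℝ)/2 - H) * N ^ (H - 3/2) = N ^ (-1 : ℝ) := by
      rw [← Real.rpow_add (by linarith), show (1:ℝ)/2 - H + (H - 3/2) = -1 by ring]
    rw [e, e1, e2]
    have h3 : (N/2) ^ (1 + p) ≤ (N - 1) ^ (1 + p) :=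
      Real.rpow_le_rpow (by linarith) (by linarith) (by linarith)
    have h4 : (N/2) ^ (1 + p) = N ^ (1 + p) / 2 ^ (1 + p) :=
      Real.div_rpow (show (0:ℝ) ≤ N by linarith) (show (0:ℝ) ≤ 2 by norm_num) (1 + p)
    have h5 : (2:ℝ) ^ (1 + p) ≤ 4 := by
      calc (2:ℝ) ^ (1 + p) ≤ 2 ^ (2:ℝ) :=
            Real.rpow_le_rpow_of_exponent_le one_le_two (by rw [hp_def]; linarith)
        _ = 4 := by
            rw [show (2:ℝ) = ((2:ℕ):ℝ) by norm_num, Real.rpow_natCast]; norm_num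
    have h6 : N ^ (1 + p) / 4 ≤ N ^ (1 + p) / 2 ^ (1 + p) := by
      apply div_le_div_of_nonneg_left (Real.rpow_nonneg (by linarith) _) _ h5
      positivity
    have h7 : N ^ (1 + p) * N ^ (-1:ℝ) = N ^ p := by
      rw [← Real.rpow_add (by linarith), show 1 + p + (-1:ℝ) = p by ring]
    have hNinv : (0:ℝ) ≤ N ^ (-1:ℝ) := Real.rpow_nonneg (by linarith) _
    calc N ^ p / 4 = (N ^ (1 + p) / 4) * N ^ (-1:ℝ) := by
          rw [div_mul_eq_mul_div, h7]
      _ ≤ (N/2) ^ (1 + p) * N ^ (-1:ℝ) := by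
          rw [h4]; exact mul_le_mul_of_nonneg_right h6 hNinv
      _ ≤ (N - 1) ^ (1 + p) * N ^ (-1:ℝ) := mul_le_mul_of_nonneg_right h3 hNinv
  -- sum lower bound
  have hsum : A * ((N - 1) * L) ≤ ∑ i ∈ Finset.Icc 1 (n - 1), jn H σ n i := by
    have hterm : ∀ i ∈ Finset.Icc 1 (n - 1), A * L ≤ jn H σ n i := by
      intro i hi
      obtain ⟨hi1, hi2⟩ := Finset.mem_Icc.mp hi
      have hin : i + 1 ≤ n := by omega
      have hi2' : (i:ℝ) ≤ N - 1 := by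
        have : ((i:ℕ):ℝ) + 1 ≤ (n:ℝ) := by exact_mod_cast hin
        linarith
      rw [jn, ← hA_def]
      exact mul_le_mul_of_nonneg_left
        (jn_integral_ge h1 h2 n i hn2 hi1 hi2') hA.le
    have hcard : (Finset.Icc 1 (n - 1)).card = n - 1 := by
      rw [Nat.card_Icc]; omega
    have := Finset.card_nsmul_le_sum (Finset.Icc 1 (n - 1))
      (fun i => jn H σ n i) (A * L) hterm
    rw [hcard, nsmul_eq_mul] at this
    have hcast : ((n - 1 : ℕ) : ℝ) = N - 1 := by
      rw [Nat.cast_sub (by omega), Nat.cast_one]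
    rw [hcast] at this
    calc A * ((N - 1) * L) = (N - 1) * (A * L) := by ring
      _ ≤ _ := this
  -- gn upper bound
  have hgn : gn H σ n ≤ A * (2 / p) := by
    have step1 : gn H σ n ≤ A * ((N - 1) ^ ((1:ℝ)/2 - H) * (N ^ (H - 1/2) / (H - 1/2))) := by
      rw [gn, ← hA_def]
      exact mul_le_mul_of_nonneg_left (gn_integral_le h1 h2 n hn2) hA.le
    refine le_trans step1 (mul_le_mul_of_nonneg_left ?_ hA.le)
    have key : (N - 1) ^ ((1:ℝ)/2 - H) * N ^ (H - 1/2) ≤ 2 := by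
      have k1 : N ^ (H - 1/2) ≤ (2 * (N - 1)) ^ (H - 1/2) :=
        Real.rpow_le_rpow (by linarith) (by linarith) (by linarith)
      have k2 : (2 * (N - 1)) ^ (H - 1/2) = 2 ^ (H - 1/2) * (N - 1) ^ (H - 1/2) :=
        Real.mul_rpow (by norm_num) (by linarith)
      have k3 : (N - 1) ^ ((1:ℝ)/2 - H) = ((N - 1) ^ (H - 1/2))⁻¹ := by
        rw [show (1:ℝ)/2 - H = -(H - 1/2) by ring, Real.rpow_neg (by linarith)]
      have k4 : (0:ℝ) < (N - 1) ^ (H - 1/2) := Real.rpow_pos_of_pos (by linarith) _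
      have k5 : (2:ℝ) ^ (H - 1/2) ≤ 2 := by
        calc (2:ℝ) ^ (H - 1/2) ≤ 2 ^ (1:ℝ) :=
              Real.rpow_le_rpow_of_exponent_le one_le_two (by linarith)
          _ = 2 := Real.rpow_one 2
      calc (N - 1) ^ ((1:ℝ)/2 - H) * N ^ (H - 1/2)
          ≤ (N - 1) ^ ((1:ℝ)/2 - H) * (2 ^ (H - 1/2) * (N - 1) ^ (H - 1/2)) := by
            rw [← k2]
            exact mul_le_mul_of_nonneg_left k1 (Real.rpow_nonneg (by linarith) _)
        _ = 2 ^ (H - 1/2) := by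
            rw [k3, show ((N - 1) ^ (H - 1/2))⁻¹ * (2 ^ (H - 1/2) * (N - 1) ^ (H - 1/2))
              = 2 ^ (H - 1/2) * (((N - 1) ^ (H - 1/2))⁻¹ * (N - 1) ^ (H - 1/2)) by ring,
              inv_mul_cancel₀ k4.ne', mul_one]
        _ ≤ 2 := k5
    calc (N - 1) ^ ((1:ℝ)/2 - H) * (N ^ (H - 1/2) / (H - 1/2))
        = ((N - 1) ^ ((1:ℝ)/2 - H) * N ^ (H - 1/2)) / p := by rw [hp_def]; ring
      _ ≤ 2 / p := by
          have := mul_le_mul_of_nonneg_right key (by positivity : (0:ℝ) ≤ p⁻¹)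
          simpa [div_eq_mul_inv] using this
  have hgn0 : 0 ≤ gn H σ n := gn_nonneg h1 h2 hσ.le hn2
  have k1 : A * (N ^ p / 4) ≤ A * ((N - 1) * L) := mul_le_mul_of_nonneg_left hL4 hA.le
  have s1 : A * (N ^ p / 4) ≤ ∑ i ∈ Finset.Icc 1 (n - 1), jn H σ n i := le_trans k1 hsum
  obtain ⟨G, hG⟩ : ∃ G : ℝ, G = 16 / p := ⟨_, rfl⟩
  obtain ⟨T, hTT⟩ : ∃ T : ℝ, T = N ^ p := ⟨_, rfl⟩
  rw [← hG, ← hTT] at hT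
  rw [← hTT] at s1
  rw [show (2:ℝ) / p = G / 8 by rw [hG]; ring] at hgn
  have k2 : A * G ≤ A * T := mul_le_mul_of_nonneg_left hT hA.le
  rw [← hTT]
  constructor
  · linarith [s1, hgn, k2]
  · linarith [s1, hgn, k2, hgn0]
end

section
/- Let N ≥ n₀ ≥ 2 be integers, s₀ > 0, λ ∈ [0,1], and suppose ∑_{i=1}^{k−1} j_k(i) + g_k < N^H for every k ≤ n₀−1 (so that the all-down price S_k^{(N)}(−1,…,−1) is strictly positive for k ≤ n₀−1). Then (1−λ)·S_{n₀−1}^{(N)}(−1,…,−1) − S_{n₀}^{(N)}(−1,…,−1,x) ≥ 0 for both x ∈ {−1,1} if and only if λ ≤ (∑_{i=1}^{n₀−1} j_{n₀}(i) − g_{n₀})/N^H; moreover, whenever this inequality on λ holds, the difference (1−λ)·S_{n₀−1}^{(N)}(−1,…,−1) − S_{n₀}^{(N)}(−1,…,−1,−1) is strictly positive. -/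
open MeasureTheory

/-- The stock price in the `N`-fractional binary market after `n` steps along the
sign path `x` (indexed from 1):
`S_n^{(N)}(x) = s₀ ∏_{k=1}^n (1 + (∑_{i=1}^{k-1} j_k(i) x_i + g_k x_k)/N^H)`. -/
noncomputable def Sp (H σ : ℝ) (N : ℕ) (s₀ : ℝ) (n : ℕ) (x : ℕ → ℝ) : ℝ :=
  s₀ * ∏ k ∈ Finset.Icc 1 n,
    (1 + ((∑ i ∈ Finset.Icc 1 (k - 1), jn H σ k i * x i) + gn H σ k * x k) / (N : ℝ) ^ H)

lemma cH_pos_s6 {H : ℝ} (hH : H ∈ Set.Ioo (1/2 : ℝ) 1) : 0 < cH H := by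
  obtain ⟨h1, h2⟩ := hH
  have hG1 : 0 < Real.Gamma (3/2 - H) := Real.Gamma_pos_of_pos (by linarith)
  have hG2 : 0 < Real.Gamma (H + 1/2) := Real.Gamma_pos_of_pos (by linarith)
  have hG3 : 0 < Real.Gamma (2 - 2*H) := Real.Gamma_pos_of_pos (by linarith)
  exact Real.sqrt_pos.mpr (div_pos (mul_pos (by linarith) hG1) (mul_pos hG2 hG3))

lemma gn_pos {H : ℝ} (hH : H ∈ Set.Ioo (1/2 : ℝ) 1) {σ : ℝ} (hσ : 0 < σ) {n : ℕ}
    (hn : 2 ≤ n) : 0 < gn H σ n := by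
  obtain ⟨h1, h2⟩ := hH
  have hC : 0 < σ * cH H * (H - 1/2) :=
    mul_pos (mul_pos hσ (cH_pos_s6 ⟨h1, h2⟩)) (by linarith)
  have hn2 : (2:ℝ) ≤ (n:ℝ) := by exact_mod_cast hn
  set a : ℝ := (n:ℝ) - 1 with ha
  have h1a : (1:ℝ) ≤ a := by rw [ha]; linarith
  have hab : a < (n:ℝ) := by rw [ha]; linarith
  have hr : (-1:ℝ) < H - 3/2 := by linarith
  -- positivity of the reference inner integral
  have hc0pos : 0 < ∫ y in (0:ℝ)..1, y ^ (H - 3/2) := by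
    rw [integral_rpow (Or.inl hr), Real.one_rpow,
      Real.zero_rpow (ne_of_gt (by linarith : (0:ℝ) < H - 3/2 + 1))]
    rw [sub_zero]
    exact div_pos one_pos (by linarith)
  -- bounds on the base
  have hbase : ∀ x ∈ Set.Icc a (n:ℝ), ∀ y ∈ Set.Icc (0:ℝ) 1,
      1 ≤ y * ((n:ℝ) - x) + x ∧ y * ((n:ℝ) - x) + x ≤ (n:ℝ) := by
    intro x hx y hy
    constructor
    · nlinarith [mul_nonneg hy.1 (sub_nonneg.mpr hx.2), hx.1]
    · nlinarith [mul_nonneg (sub_nonneg.mpr hy.2) (sub_nonneg.mpr hx.2)]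
  -- inner integrability
  have hinner : ∀ x ∈ Set.Icc a (n:ℝ),
      IntervalIntegrable (fun y => (y * ((n:ℝ) - x) + x) ^ (H - 1/2) * y ^ (H - 3/2))
        volume 0 1 := by
    intro x hx
    apply (intervalIntegral.intervalIntegrable_rpow' hr).continuousOn_mul
    apply ContinuousOn.rpow_const
    · exact ((continuous_id.mul continuous_const).add continuous_const).continuousOn
    · intro y _; right; linarith
  -- inner lower bound
  have hIlow : ∀ x ∈ Set.Icc a (n:ℝ),
      (∫ y in (0:ℝ)..1, y ^ (H - 3/2)) ≤
        ∫ y in (0:ℝ)..1, (y * ((n:ℝ) - x) + x) ^ (H - 1/2) * y ^ (H - 3/2) := by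
    intro x hx
    apply intervalIntegral.integral_mono_on zero_le_one
      (intervalIntegral.intervalIntegrable_rpow' hr) (hinner x hx)
    intro y hy
    have hb := hbase x hx y hy
    calc y ^ (H - 3/2) = 1 * y ^ (H - 3/2) := (one_mul _).symm
      _ ≤ _ := mul_le_mul_of_nonneg_right
          (Real.one_le_rpow hb.1 (by linarith)) (Real.rpow_nonneg hy.1 _)
  -- inner upper bound
  have hIup : ∀ x ∈ Set.Icc a (n:ℝ),
      (∫ y in (0:ℝ)..1, (y * ((n:ℝ) - x) + x) ^ (H - 1/2) * y ^ (H - 3/2)) ≤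
        (n:ℝ) ^ (H - 1/2) * ∫ y in (0:ℝ)..1, y ^ (H - 3/2) := by
    intro x hx
    rw [← intervalIntegral.integral_const_mul]
    apply intervalIntegral.integral_mono_on zero_le_one (hinner x hx)
      ((intervalIntegral.intervalIntegrable_rpow' hr).const_mul _)
    intro y hy
    have hb := hbase x hx y hy
    exact mul_le_mul_of_nonneg_right
      (Real.rpow_le_rpow (by linarith [hb.1]) hb.2 (by linarith))
      (Real.rpow_nonneg hy.1 _)
  set f : ℝ → ℝ := fun x => x ^ ((1:ℝ)/2 - H) * ((n:ℝ) - x) ^ (H - 1/2) *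
      ∫ y in (0:ℝ)..1, (y * ((n:ℝ) - x) + x) ^ (H - 1/2) * y ^ (H - 3/2) with hf
  set M : ℝ := (n:ℝ) ^ (H - 1/2) * ∫ y in (0:ℝ)..1, y ^ (H - 3/2) with hM
  -- measurability of f
  have hfmeas : Measurable f := by
    apply Measurable.mul
    · fun_prop
    · have hunc : StronglyMeasurable
          (Function.uncurry fun (x y : ℝ) =>
            (y * ((n:ℝ) - x) + x) ^ (H - 1/2) * y ^ (H - 3/2)) := by
        apply Measurable.stronglyMeasurable
        fun_prop
      have := hunc.integral_prod_right (ν := volume.restrict (Set.Ioc (0:ℝ) 1))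
      have heq : (fun x : ℝ => ∫ y in (0:ℝ)..1,
          (y * ((n:ℝ) - x) + x) ^ (H - 1/2) * y ^ (H - 3/2)) =
          fun x : ℝ => ∫ y in Set.Ioc (0:ℝ) 1,
          (y * ((n:ℝ) - x) + x) ^ (H - 1/2) * y ^ (H - 3/2) := by
        funext x
        rw [intervalIntegral.integral_of_le zero_le_one]
      rw [heq]
      exact this.measurable
  -- integrability of f
  have hfint : IntervalIntegrable f volume a (n:ℝ) := by
    rw [intervalIntegrable_iff_integrableOn_Ioc_of_le hab.le]
    apply Integrable.mono' (integrable_const M) hfmeas.aestronglyMeasurable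
    filter_upwards [ae_restrict_mem measurableSet_Ioc] with x hx
    have hx' : x ∈ Set.Icc a (n:ℝ) := ⟨hx.1.le, hx.2⟩
    have hA0 : (0:ℝ) ≤ x ^ ((1:ℝ)/2 - H) := Real.rpow_nonneg (by linarith [hx'.1]) _
    have hA1 : x ^ ((1:ℝ)/2 - H) ≤ 1 :=
      Real.rpow_le_one_of_one_le_of_nonpos (by linarith [hx'.1]) (by linarith)
    have hB0 : (0:ℝ) ≤ ((n:ℝ) - x) ^ (H - 1/2) := Real.rpow_nonneg (by linarith [hx'.2]) _
    have hB1 : ((n:ℝ) - x) ^ (H - 1/2) ≤ 1 :=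
      Real.rpow_le_one (by linarith [hx'.2]) (by linarith [hx.1]) (by linarith)
    have hC0 : (0:ℝ) ≤ ∫ y in (0:ℝ)..1,
        (y * ((n:ℝ) - x) + x) ^ (H - 1/2) * y ^ (H - 3/2) :=
      le_trans hc0pos.le (hIlow x hx')
    have hCM := hIup x hx'
    rw [Real.norm_eq_abs, hf]
    rw [abs_of_nonneg (mul_nonneg (mul_nonneg hA0 hB0) hC0)]
    calc x ^ ((1:ℝ)/2 - H) * ((n:ℝ) - x) ^ (H - 1/2) *
          ∫ y in (0:ℝ)..1, (y * ((n:ℝ) - x) + x) ^ (H - 1/2) * y ^ (H - 3/2)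
        ≤ 1 * M := by
          apply mul_le_mul _ hCM hC0 zero_le_one
          exact mul_le_one₀ hA1 hB0 hB1
      _ = M := one_mul M
  -- positivity of f on the open interval
  have hfpos : ∀ x ∈ Set.Ioo a (n:ℝ), 0 < f x := by
    intro x hx
    have hx' : x ∈ Set.Icc a (n:ℝ) := ⟨hx.1.le, hx.2.le⟩
    have hA : 0 < x ^ ((1:ℝ)/2 - H) := Real.rpow_pos_of_pos (by linarith [hx.1]) _
    have hB : 0 < ((n:ℝ) - x) ^ (H - 1/2) := Real.rpow_pos_of_pos (by linarith [hx.2]) _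
    have hCpos : 0 < ∫ y in (0:ℝ)..1,
        (y * ((n:ℝ) - x) + x) ^ (H - 1/2) * y ^ (H - 3/2) :=
      lt_of_lt_of_le hc0pos (hIlow x hx')
    exact mul_pos (mul_pos hA hB) hCpos
  have hint : 0 < ∫ x in a..(n:ℝ), f x :=
    intervalIntegral.intervalIntegral_pos_of_pos_on hfint hfpos hab
  unfold gn
  rw [← ha]
  exact mul_pos hC hint

lemma Sp_succ_top (H σ : ℝ) (N : ℕ) (s₀ : ℝ) (n : ℕ) (hn : 1 ≤ n) (x : ℕ → ℝ) :
    Sp H σ N s₀ n x = Sp H σ N s₀ (n - 1) x *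
      (1 + ((∑ i ∈ Finset.Icc 1 (n - 1), jn H σ n i * x i) + gn H σ n * x n)
        / (N : ℝ) ^ H) := by
  simp only [Sp]
  have hins : Finset.Icc 1 n = insert n (Finset.Icc 1 (n - 1)) := by
    ext k; simp only [Finset.mem_Icc, Finset.mem_insert]; omega
  rw [hins, Finset.prod_insert (by simp only [Finset.mem_Icc]; omega)]
  ring

lemma Sp_congr (H σ : ℝ) (N : ℕ) (s₀ : ℝ) (n : ℕ) (x y : ℕ → ℝ)
    (h : ∀ i, 1 ≤ i → i ≤ n → x i = y i) : Sp H σ N s₀ n x = Sp H σ N s₀ n y := by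
  simp only [Sp]
  congr 1
  apply Finset.prod_congr rfl
  intro k hk
  rw [Finset.mem_Icc] at hk
  rw [h k hk.1 hk.2]
  have hsum : (∑ i ∈ Finset.Icc 1 (k - 1), jn H σ k i * x i) =
      ∑ i ∈ Finset.Icc 1 (k - 1), jn H σ k i * y i := by
    apply Finset.sum_congr rfl
    intro i hi
    rw [Finset.mem_Icc] at hi
    rw [h i hi.1 (by omega)]
  rw [hsum]

/-- Characterization of the 1-step arbitrage with transaction costs `λ` on the all-down
path: the liquidation value at time `n₀` is nonnegative in both scenarios iff
`λ ≤ (∑_{i=1}^{n₀-1} j_{n₀}(i) - g_{n₀})/N^H`, and in that case the value is strictly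
positive on the all-down continuation. -/
theorem one_step_arbitrage_characterization (H σ : ℝ) (hH : H ∈ Set.Ioo (1/2 : ℝ) 1)
    (hσ : 0 < σ) (N n₀ : ℕ) (hn₀ : 2 ≤ n₀) (hN : n₀ ≤ N) (s₀ : ℝ) (hs₀ : 0 < s₀)
    (lam : ℝ) (hlam : lam ∈ Set.Icc (0:ℝ) 1)
    (hpos : ∀ k : ℕ, 1 ≤ k → k ≤ n₀ - 1 →
      (∑ i ∈ Finset.Icc 1 (k - 1), jn H σ k i) + gn H σ k < (N : ℝ) ^ H) :
    ((∀ x : ℝ, x = -1 ∨ x = 1 →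
        0 ≤ (1 - lam) * Sp H σ N s₀ (n₀ - 1) (fun _ => -1)
            - Sp H σ N s₀ n₀ (fun i => if i = n₀ then x else -1)) ↔
      lam ≤ ((∑ i ∈ Finset.Icc 1 (n₀ - 1), jn H σ n₀ i) - gn H σ n₀) / (N : ℝ) ^ H) ∧
    (lam ≤ ((∑ i ∈ Finset.Icc 1 (n₀ - 1), jn H σ n₀ i) - gn H σ n₀) / (N : ℝ) ^ H →
      0 < (1 - lam) * Sp H σ N s₀ (n₀ - 1) (fun _ => -1)
          - Sp H σ N s₀ n₀ (fun _ => -1)) := by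
  have hN0 : (0:ℝ) < (N:ℝ) := by exact_mod_cast (by omega : 0 < N)
  set P : ℝ := (N:ℝ) ^ H with hPdef
  have hP : 0 < P := Real.rpow_pos_of_pos hN0 H
  set J : ℝ := ∑ i ∈ Finset.Icc 1 (n₀ - 1), jn H σ n₀ i with hJdef
  have hg : 0 < gn H σ n₀ := gn_pos hH hσ hn₀
  set g : ℝ := gn H σ n₀ with hgdef
  set S : ℝ := Sp H σ N s₀ (n₀ - 1) (fun _ => -1) with hSdef
  -- positivity of S
  have hSpos : 0 < S := by
    rw [hSdef]
    simp only [Sp]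
    apply mul_pos hs₀
    apply Finset.prod_pos
    intro k hk
    rw [Finset.mem_Icc] at hk
    have hlt := hpos k hk.1 hk.2
    have e : (∑ i ∈ Finset.Icc 1 (k - 1), jn H σ k i * (-1)) =
        -(∑ i ∈ Finset.Icc 1 (k - 1), jn H σ k i) := by simp
    rw [e, ← hPdef]
    have e2 : (-(∑ i ∈ Finset.Icc 1 (k - 1), jn H σ k i) + gn H σ k * (-1)) / P =
        -(((∑ i ∈ Finset.Icc 1 (k - 1), jn H σ k i) + gn H σ k) / P) := by ring
    rw [e2]
    have := (div_lt_one hP).mpr hlt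
    linarith
  -- factorization of the n₀-step price
  have hfac : ∀ x : ℝ, Sp H σ N s₀ n₀ (fun i => if i = n₀ then x else -1) =
      S * (1 + (-J + g * x) / P) := by
    intro x
    rw [Sp_succ_top H σ N s₀ n₀ (by omega)]
    have e1 : Sp H σ N s₀ (n₀ - 1) (fun i => if i = n₀ then x else -1) = S := by
      rw [hSdef]
      exact Sp_congr H σ N s₀ (n₀ - 1) _ _
        (fun i h1 h2 => by rw [if_neg (by omega : ¬ i = n₀)])
    rw [e1, if_pos rfl]
    have e2 : (∑ i ∈ Finset.Icc 1 (n₀ - 1), jn H σ n₀ i * (if i = n₀ then x else -1)) =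
        -J := by
      rw [hJdef, ← Finset.sum_neg_distrib]
      apply Finset.sum_congr rfl
      intro i hi
      rw [Finset.mem_Icc] at hi
      rw [if_neg (by omega : ¬ i = n₀), mul_neg_one]
    rw [e2, ← hPdef, ← hgdef]
  -- the difference formula
  have hD : ∀ x : ℝ, (1 - lam) * S - Sp H σ N s₀ n₀ (fun i => if i = n₀ then x else -1)
      = S * ((J - g * x) / P - lam) := by
    intro x
    rw [hfac x]
    field_simp
    ring
  constructor
  · constructor
    · intro h
      have h1 := h 1 (Or.inr rfl)
      rw [hD 1] at h1
      by_contra hcon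
      push_neg at hcon
      have : S * ((J - g * 1) / P - lam) < 0 :=
        mul_neg_of_pos_of_neg hSpos (by rw [mul_one]; linarith)
      linarith
    · intro hl x hx
      rw [hD x]
      apply mul_nonneg hSpos.le
      have hgx : g * x ≤ g := by
        rcases hx with h | h <;> rw [h] <;> nlinarith
      have h2 : (J - g) / P ≤ (J - g * x) / P :=
        (div_le_div_iff_of_pos_right hP).mpr (by linarith)
      linarith
  · intro hl
    have hpath : (fun _ : ℕ => (-1:ℝ)) = (fun i => if i = n₀ then (-1:ℝ) else -1) := by
      funext i
      exact (ite_self _).symm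
    rw [hpath, hD (-1)]
    apply mul_pos hSpos
    have h2 : (J - g) / P < (J - g * (-1)) / P :=
      (div_lt_div_iff_of_pos_right hP).mpr (by linarith)
    linarith
end
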